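/- arXiv:2504.17743 — 5 statements merged into one kernel-verified Lean document; each statement's English description precedes it below -/
import Mathlib

section
/- Let d = (d_1, ..., d_n) be a non-increasing sequence of non-negative integers with even sum, with sum at most 4(n-1), n > 4, d_1 ≤ n-1, d_n ≥ 2, and d_4 ≥ 3. Then d is graphical, i.e., for each r in [1, n-1], the Erdős–Gallai inequality sum_{i=1}^r d_i ≤ r(r-1) + sum_{i=r+1}^n min(r, d_i) holds. -/
/-- sufficient condition (Corollary: realizable if `d₄ ≥ 3`) for the
Erdős–Gallai inequalities. Degree sequence `d` indexed by `1, …, n`. -/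
theorem stmt0 (n : ℕ) (d : ℕ → ℕ)
    (hmono : ∀ i j, 1 ≤ i → i ≤ j → j ≤ n → d j ≤ d i)
    (heven : Even (∑ i ∈ Finset.Icc 1 n, d i))
    (hsum : ∑ i ∈ Finset.Icc 1 n, d i ≤ 4 * (n - 1))
    (hn : 4 < n) (hd1 : d 1 ≤ n - 1) (hdn : 2 ≤ d n) (hd4 : 3 ≤ d 4) :
    ∀ r, 1 ≤ r → r ≤ n - 1 →
      ∑ i ∈ Finset.Icc 1 r, d i ≤ r * (r - 1) + ∑ i ∈ Finset.Icc (r + 1) n, min r (d i) := by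
  have hd2 : ∀ i, 1 ≤ i → i ≤ n → 2 ≤ d i := fun i h1 h2 =>
    le_trans hdn (hmono i n h1 h2 le_rfl)
  have hIoc : ∀ k : ℕ, Finset.Icc 1 k = Finset.Ioc 0 k := fun k => by
    ext x; simp [Nat.lt_iff_add_one_le]
  intro r hr1 hrn
  have hrn' : r ≤ n := by omega
  rw [hIoc, Finset.Icc_add_one_left_eq_Ioc]
  have hsplit : (∑ i ∈ Finset.Ioc 0 r, d i) + ∑ i ∈ Finset.Ioc r n, d i
      = ∑ i ∈ Finset.Ioc 0 n, d i :=
    Finset.sum_Ioc_consecutive d (Nat.zero_le r) hrn'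
  have htot : ∑ i ∈ Finset.Ioc 0 n, d i ≤ 4 * (n - 1) := by rw [← hIoc]; exact hsum
  have htail : 2 * (n - r) ≤ ∑ i ∈ Finset.Ioc r n, d i := by
    calc 2 * (n - r) = (Finset.Ioc r n).card • 2 := by
          rw [Nat.card_Ioc, smul_eq_mul, Nat.mul_comm]
      _ ≤ _ := Finset.card_nsmul_le_sum _ _ _ (fun i hi => by
          simp only [Finset.mem_Ioc] at hi; exact hd2 i (by omega) hi.2)
  rcases eq_or_lt_of_le hr1 with h1 | h1
  · -- r = 1
    subst h1
    have : ∑ i ∈ Finset.Ioc 1 n, min 1 (d i) = n - 1 := by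
      rw [Finset.sum_congr rfl (fun i hi => ?_), Finset.sum_const, Nat.card_Ioc,
        smul_eq_mul, Nat.mul_one]
      simp only [Finset.mem_Ioc] at hi
      exact min_eq_left (le_trans (by norm_num) (hd2 i (by omega) hi.2))
    rw [this]
    simpa using hd1
  rcases eq_or_lt_of_le (Nat.succ_le_of_lt h1) with h2 | h2
  · -- r = 2
    have h2 : r = 2 := by omega
    subst h2
    have hm : 2 * (n - 2) ≤ ∑ i ∈ Finset.Ioc 2 n, min 2 (d i) := by
      calc 2 * (n - 2) = (Finset.Ioc 2 n).card • 2 := by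
            rw [Nat.card_Ioc, smul_eq_mul, Nat.mul_comm]
        _ ≤ _ := Finset.card_nsmul_le_sum _ _ _ (fun i hi => by
            simp only [Finset.mem_Ioc] at hi
            exact le_min le_rfl (hd2 i (by omega) hi.2))
    have hhead : ∑ i ∈ Finset.Ioc 0 2, d i ≤ 2 * (n - 1) := by
      have : Finset.Ioc 0 2 = {1, 2} := by decide
      rw [this, Finset.sum_insert (by decide), Finset.sum_singleton]
      have := hmono 1 2 le_rfl (by norm_num) (by omega)
      omega
    omega
  rcases eq_or_lt_of_le (Nat.succ_le_of_lt h2) with h3 | h3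
  · -- r = 3
    have h3 : r = 3 := by omega
    subst h3
    have h4s : ∑ i ∈ Finset.Ioc 3 4, d i = d 4 := by
      rw [show Finset.Ioc 3 4 = {4} by decide, Finset.sum_singleton]
    have hsp : (∑ i ∈ Finset.Ioc 3 4, d i) + ∑ i ∈ Finset.Ioc 4 n, d i
        = ∑ i ∈ Finset.Ioc 3 n, d i :=
      Finset.sum_Ioc_consecutive d (by norm_num) (by omega)
    have ht4 : 2 * (n - 4) ≤ ∑ i ∈ Finset.Ioc 4 n, d i := by
      calc 2 * (n - 4) = (Finset.Ioc 4 n).card • 2 := by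
            rw [Nat.card_Ioc, smul_eq_mul, Nat.mul_comm]
        _ ≤ _ := Finset.card_nsmul_le_sum _ _ _ (fun i hi => by
            simp only [Finset.mem_Ioc] at hi; exact hd2 i (by omega) hi.2)
    -- tail of min sum
    have hm4s : ∑ i ∈ Finset.Ioc 3 4, min 3 (d i) = min 3 (d 4) := by
      rw [show Finset.Ioc 3 4 = {4} by decide, Finset.sum_singleton]
    have hmsp : (∑ i ∈ Finset.Ioc 3 4, min 3 (d i)) + ∑ i ∈ Finset.Ioc 4 n, min 3 (d i)
        = ∑ i ∈ Finset.Ioc 3 n, min 3 (d i) :=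
      Finset.sum_Ioc_consecutive _ (by norm_num) (by omega)
    have hmt : 2 * (n - 4) ≤ ∑ i ∈ Finset.Ioc 4 n, min 3 (d i) := by
      calc 2 * (n - 4) = (Finset.Ioc 4 n).card • 2 := by
            rw [Nat.card_Ioc, smul_eq_mul, Nat.mul_comm]
        _ ≤ _ := Finset.card_nsmul_le_sum _ _ _ (fun i hi => by
            simp only [Finset.mem_Ioc] at hi
            exact le_min (by norm_num) (hd2 i (by omega) hi.2))
    have hm4 : min 3 (d 4) = 3 := min_eq_left hd4
    have hd4' : d 4 ≥ 3 := hd4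
    omega
  · -- r ≥ 4
    have hr4 : 4 ≤ r := by omega
    have hm : 2 * (n - r) ≤ ∑ i ∈ Finset.Ioc r n, min r (d i) := by
      calc 2 * (n - r) = (Finset.Ioc r n).card • 2 := by
            rw [Nat.card_Ioc, smul_eq_mul, Nat.mul_comm]
        _ ≤ _ := Finset.card_nsmul_le_sum _ _ _ (fun i hi => by
            simp only [Finset.mem_Ioc] at hi
            exact le_min (by omega) (hd2 i (by omega) hi.2))
    have hq : 4 * (r - 1) ≤ r * (r - 1) := Nat.mul_le_mul_right _ hr4
    omega
end

section
/- Let d = (d_1, ..., d_n) be a non-increasing sequence of non-negative integers with sum exactly 4(n-1) - 2, n > 4, d_1 ≤ n-1, d_{n-1} ≥ 2, d_n ≥ 1, and d_4 ≥ 3. Then for each r in [1, n-1], the Erdős–Gallai inequality sum_{i=1}^r d_i ≤ r(r-1) + sum_{i=r+1}^n min(r, d_i) holds, so d is graphical. -/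
open Finset

private lemma sum_split (a b c : ℕ) (hab : a ≤ b + 1) (hbc : b ≤ c) (f : ℕ → ℕ) :
    ∑ i ∈ Finset.Icc a c, f i = ∑ i ∈ Finset.Icc a b, f i + ∑ i ∈ Finset.Icc (b+1) c, f i := by
  rw [← Finset.sum_union]
  · congr 1
    ext x
    simp only [Finset.mem_union, Finset.mem_Icc]
    omega
  · rw [Finset.disjoint_left]
    intro x hx hx'
    simp only [Finset.mem_Icc] at hx hx'
    omega

private lemma sum_ge (a b c : ℕ) (f : ℕ → ℕ) (h : ∀ i, a ≤ i → i ≤ b → c ≤ f i) :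
    (b + 1 - a) * c ≤ ∑ i ∈ Finset.Icc a b, f i := by
  calc (b + 1 - a) * c = ∑ _i ∈ Finset.Icc a b, c := by
        rw [Finset.sum_const, Nat.card_Icc, smul_eq_mul]
    _ ≤ _ := Finset.sum_le_sum fun i hi => by
        rw [Finset.mem_Icc] at hi; exact h i hi.1 hi.2

/-- Erdős–Gallai inequalities for sequences with sum `4(n-1) - 2`. -/
theorem stmt1 (n : ℕ) (d : ℕ → ℕ)
    (hmono : ∀ i j, 1 ≤ i → i ≤ j → j ≤ n → d j ≤ d i)
    (hsum : ∑ i ∈ Finset.Icc 1 n, d i = 4 * (n - 1) - 2)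
    (hn : 4 < n) (hd1 : d 1 ≤ n - 1) (hdn1 : 2 ≤ d (n - 1)) (hdn : 1 ≤ d n)
    (hd4 : 3 ≤ d 4) :
    ∀ r, 1 ≤ r → r ≤ n - 1 →
      ∑ i ∈ Finset.Icc 1 r, d i ≤ r * (r - 1) + ∑ i ∈ Finset.Icc (r + 1) n, min r (d i) := by
  intro r hr1 hr2
  have h1 : ∀ i, 1 ≤ i → i ≤ n → 1 ≤ d i := fun i hi hi' => hdn.trans (hmono i n hi hi' le_rfl)
  have h2 : ∀ i, 1 ≤ i → i ≤ n - 1 → 2 ≤ d i := fun i hi hi' =>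
    hdn1.trans (hmono i (n-1) hi hi' (by omega))
  have h3 : ∀ i, 1 ≤ i → i ≤ 4 → 3 ≤ d i := fun i hi hi' =>
    hd4.trans (hmono i 4 hi hi' (by omega))
  have hn1 : n - 1 + 1 = n := by omega
  have hsplit := sum_split 1 r n (by omega) (by omega) d
  rw [hsum] at hsplit
  rcases Nat.lt_or_ge r 4 with hr4 | hr4
  · interval_cases r
    · -- r = 1
      simp only [Nat.reduceAdd, Nat.reduceMul, Nat.reduceSub] at hsplit ⊢
      have hR : (n + 1 - 2) * 1 ≤ ∑ i ∈ Finset.Icc 2 n, min 1 (d i) :=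
        sum_ge 2 n 1 _ (fun i hi hi' => le_min le_rfl (h1 i (by omega) hi'))
      have hL : ∑ i ∈ Finset.Icc 1 1, d i = d 1 := by simp
      omega
    · -- r = 2
      simp only [Nat.reduceAdd, Nat.reduceMul, Nat.reduceSub] at hsplit ⊢
      have t1 : ∑ i ∈ Finset.Icc 3 n, d i
          = ∑ i ∈ Finset.Icc 3 4, d i + ∑ i ∈ Finset.Icc 5 n, d i :=
        sum_split 3 4 n (by omega) (by omega) d
      have t2 : ∑ i ∈ Finset.Icc 5 n, d i
          = ∑ i ∈ Finset.Icc 5 (n-1), d i + ∑ i ∈ Finset.Icc (n-1+1) n, d i :=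
        sum_split 5 (n-1) n (by omega) (by omega) d
      rw [hn1] at t2
      have t3 : ∑ i ∈ Finset.Icc n n, d i = d n := by simp
      have b1 : (4+1-3) * 3 ≤ ∑ i ∈ Finset.Icc 3 4, d i :=
        sum_ge 3 4 3 d (fun i hi hi' => h3 i (by omega) hi')
      have b2 : (n-1+1-5) * 2 ≤ ∑ i ∈ Finset.Icc 5 (n-1), d i :=
        sum_ge 5 (n-1) 2 d (fun i hi hi' => h2 i (by omega) hi')
      have m1 : ∑ i ∈ Finset.Icc 3 n, min 2 (d i)
          = ∑ i ∈ Finset.Icc 3 (n-1), min 2 (d i) + ∑ i ∈ Finset.Icc (n-1+1) n, min 2 (d i) :=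
        sum_split 3 (n-1) n (by omega) (by omega) (fun i => min 2 (d i))
      rw [hn1] at m1
      have m2 : (n-1+1-3) * 2 ≤ ∑ i ∈ Finset.Icc 3 (n-1), min 2 (d i) :=
        sum_ge 3 (n-1) 2 _ (fun i hi hi' => le_min le_rfl (h2 i (by omega) hi'))
      have m3 : ∑ i ∈ Finset.Icc n n, min 2 (d i) = min 2 (d n) := by simp
      have m4 : 1 ≤ min 2 (d n) := le_min (by omega) (h1 n (by omega) le_rfl)
      omega
    · -- r = 3
      simp only [Nat.reduceAdd, Nat.reduceMul, Nat.reduceSub] at hsplit ⊢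
      have t1 : ∑ i ∈ Finset.Icc 4 n, d i
          = ∑ i ∈ Finset.Icc 4 4, d i + ∑ i ∈ Finset.Icc 5 n, d i :=
        sum_split 4 4 n (by omega) (by omega) d
      have t2 : ∑ i ∈ Finset.Icc 5 n, d i
          = ∑ i ∈ Finset.Icc 5 (n-1), d i + ∑ i ∈ Finset.Icc (n-1+1) n, d i :=
        sum_split 5 (n-1) n (by omega) (by omega) d
      rw [hn1] at t2
      have t3 : ∑ i ∈ Finset.Icc n n, d i = d n := by simp
      have t4 : ∑ i ∈ Finset.Icc 4 4, d i = d 4 := by simp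
      have b2 : (n-1+1-5) * 2 ≤ ∑ i ∈ Finset.Icc 5 (n-1), d i :=
        sum_ge 5 (n-1) 2 d (fun i hi hi' => h2 i (by omega) hi')
      have m1 : ∑ i ∈ Finset.Icc 4 n, min 3 (d i)
          = ∑ i ∈ Finset.Icc 4 4, min 3 (d i) + ∑ i ∈ Finset.Icc 5 n, min 3 (d i) :=
        sum_split 4 4 n (by omega) (by omega) (fun i => min 3 (d i))
      have m1' : ∑ i ∈ Finset.Icc 5 n, min 3 (d i)
          = ∑ i ∈ Finset.Icc 5 (n-1), min 3 (d i) + ∑ i ∈ Finset.Icc (n-1+1) n, min 3 (d i) :=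
        sum_split 5 (n-1) n (by omega) (by omega) (fun i => min 3 (d i))
      rw [hn1] at m1'
      have m2 : (n-1+1-5) * 2 ≤ ∑ i ∈ Finset.Icc 5 (n-1), min 3 (d i) :=
        sum_ge 5 (n-1) 2 _ (fun i hi hi' => le_min (by omega) (h2 i (by omega) hi'))
      have m3 : ∑ i ∈ Finset.Icc n n, min 3 (d i) = min 3 (d n) := by simp
      have m4 : 1 ≤ min 3 (d n) := le_min (by omega) (h1 n (by omega) le_rfl)
      have m5 : ∑ i ∈ Finset.Icc 4 4, min 3 (d i) = min 3 (d 4) := by simp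
      omega
  · -- 4 ≤ r
    have t2 : ∑ i ∈ Finset.Icc (r+1) n, d i
        = ∑ i ∈ Finset.Icc (r+1) (n-1), d i + ∑ i ∈ Finset.Icc (n-1+1) n, d i :=
      sum_split (r+1) (n-1) n (by omega) (by omega) d
    rw [hn1] at t2
    have t3 : ∑ i ∈ Finset.Icc n n, d i = d n := by simp
    have b2 : (n-1+1-(r+1)) * 2 ≤ ∑ i ∈ Finset.Icc (r+1) (n-1), d i :=
      sum_ge (r+1) (n-1) 2 d (fun i hi hi' => h2 i (by omega) hi')
    have m1 : ∑ i ∈ Finset.Icc (r+1) n, min r (d i)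
        = ∑ i ∈ Finset.Icc (r+1) (n-1), min r (d i) + ∑ i ∈ Finset.Icc (n-1+1) n, min r (d i) :=
      sum_split (r+1) (n-1) n (by omega) (by omega) (fun i => min r (d i))
    rw [hn1] at m1
    have m2 : (n-1+1-(r+1)) * 2 ≤ ∑ i ∈ Finset.Icc (r+1) (n-1), min r (d i) :=
      sum_ge (r+1) (n-1) 2 _ (fun i hi hi' => le_min (by omega) (h2 i (by omega) hi'))
    have m3 : ∑ i ∈ Finset.Icc n n, min r (d i) = min r (d n) := by simp
    have m4 : 1 ≤ min r (d n) := le_min (by omega) (h1 n (by omega) le_rfl)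
    have hK : 4 * (r-1) ≤ r * (r-1) := Nat.mul_le_mul_right _ (by omega)
    generalize hg : r * (r - 1) = K at hK ⊢
    omega
end

section
/- A degree sequence d = (d_1, ..., d_n) with n ≥ 1 is multigraphical (realizable as a loopless multigraph) if and only if sum_{i=1}^n d_i is even and d_1 ≤ sum_{i=2}^n d_i. -/
/-- A loopless multigraph on `Fin n` is encoded by its edge-multiplicity function `M`,
which is symmetric and zero on the diagonal.  `d` is multigraphical if some such `M`
realizes it as the degree sequence. -/
def IsMultigraphical {n : ℕ} (d : Fin n → ℕ) : Prop :=
  ∃ M : Fin n → Fin n → ℕ,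
    (∀ u v, M u v = M v u) ∧ (∀ v, M v v = 0) ∧ (∀ v, ∑ u, M v u = d v)

lemma even_total : ∀ {n : ℕ} (M : Fin n → Fin n → ℕ), (∀ u v, M u v = M v u) →
    (∀ v, M v v = 0) → Even (∑ v, ∑ u, M v u) := by
  intro n
  induction n with
  | zero => intro M _ _; simp
  | succ m ih =>
    intro M hsym hdiag
    have h1 : ∑ v : Fin (m+1), ∑ u, M v u
        = (∑ v : Fin m, ∑ u : Fin m, M v.castSucc u.castSucc)
          + ((∑ v : Fin m, M v.castSucc (Fin.last m))
            + (∑ u : Fin m, M (Fin.last m) u.castSucc)) := by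
      rw [Fin.sum_univ_castSucc (f := fun v => ∑ u, M v u)]
      simp only [Fin.sum_univ_castSucc (n := m)]
      rw [hdiag, Finset.sum_add_distrib]
      ring
    rw [h1]
    have h2 : ∑ v : Fin m, M v.castSucc (Fin.last m)
        = ∑ u : Fin m, M (Fin.last m) u.castSucc := by
      simp [hsym]
    rw [h2]
    have := ih (fun v u => M v.castSucc u.castSucc) (fun u v => hsym _ _) (fun v => hdiag _)
    exact this.add (Even.add_self _)

lemma key : ∀ S : ℕ, ∀ {n : ℕ} (d : Fin n → ℕ), ∑ i, d i = S → Even S →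
    (∀ v, 2 * d v ≤ S) → IsMultigraphical d := by
  intro S
  induction S using Nat.strong_induction_on with
  | _ S ih =>
    intro n d hsum heven hcond
    rcases Nat.eq_zero_or_pos S with hS0 | hSpos
    · subst hS0
      have hd : ∀ v, d v = 0 := by
        intro v
        exact Finset.sum_eq_zero_iff.mp hsum v (Finset.mem_univ v)
      exact ⟨fun _ _ => 0, fun _ _ => rfl, fun _ => rfl, fun v => by simp [hd v]⟩
    · -- S > 0, so n > 0 and there is a vertex of maximal degree
      have hne : (Finset.univ : Finset (Fin n)).Nonempty := by
        by_contra h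
        rw [Finset.not_nonempty_iff_eq_empty] at h
        rw [h, Finset.sum_empty] at hsum
        omega
      obtain ⟨i, -, hi⟩ := Finset.exists_max_image Finset.univ d hne
      have hiS : 2 * d i ≤ S := hcond i
      have hsplit : d i + ∑ v ∈ Finset.univ.erase i, d v = S := by
        rw [Finset.add_sum_erase _ d (Finset.mem_univ i)]; exact hsum
      have hdi : 1 ≤ d i := by
        by_contra h
        have hz : d i = 0 := by omega
        have : ∀ v ∈ (Finset.univ : Finset (Fin n)), d v = 0 := fun v _ => by
          have := hi v (Finset.mem_univ v); omega
        rw [Finset.sum_eq_zero this] at hsum; omega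
      have hrest : d i ≤ ∑ v ∈ Finset.univ.erase i, d v := by omega
      obtain ⟨j, hjmem, hj⟩ : ∃ j ∈ Finset.univ.erase i, d j ≠ 0 := by
        by_contra h
        push_neg at h
        rw [Finset.sum_eq_zero h] at hrest; omega
      have hji : j ≠ i := Finset.ne_of_mem_erase hjmem
      have hdj : 1 ≤ d j := Nat.one_le_iff_ne_zero.mpr hj
      have hdji : d j ≤ d i := hi j (Finset.mem_univ j)
      set d' : Fin n → ℕ := fun v => d v - (if v = i ∨ v = j then 1 else 0) with hd'
      have hind : ∀ v : Fin n, (if v = i ∨ v = j then (1:ℕ) else 0)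
          = (if v = i then 1 else 0) + (if v = j then 1 else 0) := by
        intro v
        by_cases h1 : v = i <;> by_cases h2 : v = j <;> simp_all
      have hsum' : ∑ v, d' v = S - 2 := by
        have hle : ∀ v ∈ (Finset.univ : Finset (Fin n)),
            (if v = i ∨ v = j then (1:ℕ) else 0) ≤ d v := by
          intro v _
          by_cases h1 : v = i
          · subst h1; simp [hdi]
          · by_cases h2 : v = j
            · subst h2; simp [hdj]
            · simp [h1, h2]
        rw [hd']
        rw [Finset.sum_tsub_distrib Finset.univ hle]
        have : ∑ v, (if v = i ∨ v = j then (1:ℕ) else 0) = 2 := by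
          simp only [hind]
          rw [Finset.sum_add_distrib]
          simp [Finset.sum_ite_eq']
        rw [this, hsum]
      have hS2 : 2 ≤ S := by
        rcases heven with ⟨k, hk⟩; omega
      have heven' : Even (S - 2) := by
        rcases heven with ⟨k, hk⟩; exact ⟨k - 1, by omega⟩
      have hcond' : ∀ v, 2 * d' v ≤ S - 2 := by
        intro v
        by_cases h1 : v = i
        · subst h1; simp only [hd']; simp; omega
        · by_cases h2 : v = j
          · subst h2; simp only [hd']; simp [h1]; omega
          · simp only [hd', h1, h2]
            simp
            -- need 2 * d v ≤ S - 2 ; suppose not, then 2 * d v = S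
            by_contra hcon
            push_neg at hcon
            have h2dv : 2 * d v ≤ S := hcond v
            have hveq : 2 * d v = S := by
              rcases heven with ⟨k, hk⟩; omega
            -- but S ≥ d i + d v + d j > S
            have hvi : v ≠ i := h1
            have hvj : v ≠ j := h2
            have hmem2 : v ∈ Finset.univ.erase i := Finset.mem_erase.mpr ⟨hvi, Finset.mem_univ v⟩
            have hmem3 : j ∈ (Finset.univ.erase i).erase v :=
              Finset.mem_erase.mpr ⟨fun h => hvj h.symm, hjmem⟩
            have hsplit2 : d v + ∑ w ∈ (Finset.univ.erase i).erase v, d w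
                = ∑ w ∈ Finset.univ.erase i, d w :=
              Finset.add_sum_erase _ d hmem2
            have hjle : d j ≤ ∑ w ∈ (Finset.univ.erase i).erase v, d w :=
              Finset.single_le_sum (fun _ _ => Nat.zero_le _) hmem3
            have hdvi : d v ≤ d i := hi v (Finset.mem_univ v)
            omega
      obtain ⟨M', hsym', hdiag', hdeg'⟩ :=
        ih (S - 2) (by omega) d' hsum' heven' hcond'
      refine ⟨fun v u => M' v u + (if (v = i ∧ u = j) ∨ (v = j ∧ u = i) then 1 else 0),
        ?_, ?_, ?_⟩
      · intro u v
        beta_reduce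
        have hiff : ((u = i ∧ v = j) ∨ (u = j ∧ v = i)) ↔
            ((v = i ∧ u = j) ∨ (v = j ∧ u = i)) := by tauto
        rw [hsym' u v]
        congr 1
        simp only [hiff]
      · intro v
        beta_reduce
        rw [hdiag' v]
        have : ¬ ((v = i ∧ v = j) ∨ (v = j ∧ v = i)) := by
          rintro (⟨h1, h2⟩ | ⟨h1, h2⟩) <;> exact hji (by omega; )
        simp [this]
      · intro v
        beta_reduce
        rw [Finset.sum_add_distrib, hdeg' v]
        by_cases h1 : v = i
        · have hiff : ∀ u : Fin n, ((v = i ∧ u = j) ∨ (v = j ∧ u = i)) ↔ u = j := by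
            intro u
            constructor
            · rintro (⟨-, h⟩ | ⟨hv, -⟩)
              · exact h
              · exact absurd (h1.symm.trans hv).symm hji
            · intro h; exact Or.inl ⟨h1, h⟩
          have hrw : ∑ u : Fin n, (if (v = i ∧ u = j) ∨ (v = j ∧ u = i) then (1:ℕ) else 0)
              = ∑ u : Fin n, (if u = j then (1:ℕ) else 0) :=
            Finset.sum_congr rfl fun u _ => if_congr (hiff u) rfl rfl
          rw [hrw, Finset.sum_ite_eq' Finset.univ j (fun _ => (1:ℕ))]
          simp only [hd', Finset.mem_univ, if_true]
          rw [if_pos (Or.inl h1)]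
          have hdv : d v = d i := by rw [h1]
          omega
        · by_cases h2 : v = j
          · have hiff : ∀ u : Fin n, ((v = i ∧ u = j) ∨ (v = j ∧ u = i)) ↔ u = i := by
              intro u
              constructor
              · rintro (⟨hv, -⟩ | ⟨-, h⟩)
                · exact absurd (h2.symm.trans hv) hji
                · exact h
              · intro h; exact Or.inr ⟨h2, h⟩
            have hrw : ∑ u : Fin n, (if (v = i ∧ u = j) ∨ (v = j ∧ u = i) then (1:ℕ) else 0)
                = ∑ u : Fin n, (if u = i then (1:ℕ) else 0) :=
              Finset.sum_congr rfl fun u _ => if_congr (hiff u) rfl rfl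
            rw [hrw, Finset.sum_ite_eq' Finset.univ i (fun _ => (1:ℕ))]
            simp only [hd', Finset.mem_univ, if_true]
            rw [if_pos (Or.inr h2)]
            have hdv : d v = d j := by rw [h2]
            omega
          · have hno : ∀ u : Fin n, ¬ ((v = i ∧ u = j) ∨ (v = j ∧ u = i)) := by
              rintro u (⟨h, -⟩ | ⟨h, -⟩); exact h1 h; exact h2 h
            have hrw : ∑ u : Fin n, (if (v = i ∧ u = j) ∨ (v = j ∧ u = i) then (1:ℕ) else 0)
                = 0 :=
              Finset.sum_eq_zero fun u _ => if_neg (hno u)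
            rw [hrw, add_zero]
            simp only [hd']
            rw [if_neg (by tauto)]
            omega

/-- Hakimi's characterization of multigraphical sequences. -/
theorem stmt2 (n : ℕ) (hn : 1 ≤ n) (d : Fin n → ℕ) (hmono : Antitone d) :
    IsMultigraphical d ↔
      (Even (∑ i, d i) ∧
        d ⟨0, hn⟩ ≤ ∑ i ∈ Finset.univ.erase ⟨0, hn⟩, d i) := by
  set i0 : Fin n := ⟨0, hn⟩ with hi0
  constructor
  · rintro ⟨M, hsym, hdiag, hdeg⟩
    constructor
    · have : ∑ i, d i = ∑ v, ∑ u, M v u := by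
        exact (Finset.sum_congr rfl fun v _ => (hdeg v).symm)
      rw [this]
      exact even_total M hsym hdiag
    · have h1 : d i0 = ∑ u ∈ Finset.univ.erase i0, M i0 u := by
        rw [← hdeg i0, ← Finset.add_sum_erase _ (M i0) (Finset.mem_univ i0), hdiag i0,
          zero_add]
      rw [h1]
      apply Finset.sum_le_sum
      intro u _
      rw [hsym i0 u, ← hdeg u]
      exact Finset.single_le_sum (fun _ _ => Nat.zero_le _) (Finset.mem_univ i0)
  · rintro ⟨heven, hle⟩
    apply key (∑ i, d i) d rfl heven
    intro v
    have hv : d v ≤ d i0 := hmono (by exact Fin.mk_le_of_le_val (Nat.zero_le _))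
    have hsplit : d i0 + ∑ i ∈ Finset.univ.erase i0, d i = ∑ i, d i :=
      Finset.add_sum_erase _ d (Finset.mem_univ i0)
    omega
end

section
/- Let G be a connected graph on n > 2 vertices containing two distinct vertices of degree 1. Then G does not admit a simple proper time-labeling making it temporally connected. Equivalently: if u and v are distinct degree-1 vertices of G with unique incident edges e_u and e_v, then any labeling λ of the edges of G by natural numbers under which every ordered pair of vertices is connected by a path with strictly increasing labels must satisfy both λ(e_u) < λ(e_v) and λ(e_v) < λ(e_u), a contradiction. -/
open SimpleGraph

/-- From degree 1, extract the unique neighbor. -/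
lemma deg_one_unique {V : Type*} [Fintype V] [DecidableEq V] (G : SimpleGraph V)
    [DecidableRel G.Adj] {u : V} (hu : G.degree u = 1) :
    ∃ x, G.Adj u x ∧ ∀ y, G.Adj u y → y = x := by
  rw [SimpleGraph.degree, Finset.card_eq_one] at hu
  obtain ⟨x, hx⟩ := hu
  refine ⟨x, ?_, fun y hy => ?_⟩
  · have : x ∈ G.neighborFinset u := by rw [hx]; exact Finset.mem_singleton_self x
    exact (SimpleGraph.mem_neighborFinset _ _ _).mp this
  · have : y ∈ G.neighborFinset u := (SimpleGraph.mem_neighborFinset _ _ _).mpr hy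
    rw [hx] at this; exact Finset.mem_singleton.mp this

/-- Last edge of a nonempty walk into `v` is an edge at `v`. -/
lemma walk_last_edge {V : Type*} (G : SimpleGraph V) :
    ∀ {a v : V} (p : G.Walk a v), ¬ p.Nil →
      ∃ x, G.Adj x v ∧ p.edges.getLast? = some s(x, v) := by
  intro a v p
  induction p with
  | nil => intro h; exact absurd SimpleGraph.Walk.nil_nil h
  | @cons a b v h q ih =>
    intro _
    by_cases hq : q.Nil
    · cases q with
      | nil => exact ⟨a, h, rfl⟩
      | cons h' q' => simp at hq
    · obtain ⟨x, hx, hl⟩ := ih hq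
      refine ⟨x, hx, ?_⟩
      have hmem : s(x, v) ∈ q.edges.getLast? := Option.mem_def.mpr hl
      have := List.mem_getLast?_cons (y := s(a, b)) hmem
      rw [SimpleGraph.Walk.edges_cons]
      exact Option.mem_def.mp this

/-- If `u, v` are adjacent and each has the other as unique neighbor, then no
vertex outside `{u, v}` admits a walk to `u`. -/
lemma no_escape {V : Type*} {G : SimpleGraph V} {u v : V}
    (hvuniq : ∀ y, G.Adj v y → y = u) (huuniq : ∀ y, G.Adj u y → y = v) :
    ∀ {a b : V} (_ : G.Walk a b), (b = u ∨ b = v) → a ≠ u → a ≠ v → False := by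
  intro a b p
  induction p with
  | nil => rintro (rfl | rfl) h1 h2
           · exact h1 rfl
           · exact h2 rfl
  | @cons a x _ h q ih =>
    intro hb hau hav
    by_cases hxu : x = u
    · subst hxu
      exact hav (huuniq a h.symm)
    by_cases hxv : x = v
    · subst hxv
      exact hau (hvuniq a h.symm)
    · exact ih hb hxu hxv

/-- a connected graph on more than two vertices with two distinct
degree-1 vertices admits no time-labeling under which every ordered pair of distinct
vertices is joined by a walk with strictly increasing labels. -/
theorem stmt5 {V : Type*} [Fintype V] [DecidableEq V] (G : SimpleGraph V)
    [DecidableRel G.Adj] (hn : 2 < Fintype.card V) (hconn : G.Connected)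
    (u v : V) (huv : u ≠ v) (hu : G.degree u = 1) (hv : G.degree v = 1) :
    ¬ ∃ lab : Sym2 V → ℕ, ∀ a b : V, a ≠ b →
        ∃ p : G.Walk a b, List.Chain' (· < ·) (p.edges.map lab) := by
  rintro ⟨lab, hlab⟩
  obtain ⟨u', hu'adj, hu'uniq⟩ := deg_one_unique G hu
  obtain ⟨v', hv'adj, hv'uniq⟩ := deg_one_unique G hv
  -- The two pendant edges are distinct.
  have hedges : s(u, u') ≠ s(v, v') := by
    intro heq
    rw [Sym2.eq_iff] at heq
    rcases heq with ⟨h1, _⟩ | ⟨h1, h2⟩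
    · exact huv h1
    -- then u' = v and v' = u, so u-v is an isolated edge; contradicts card > 2.
    -- find a third vertex
    have hcard : ¬ (Finset.univ : Finset V).card ≤ ({u, v} : Finset V).card := by
      intro hle
      have := le_trans hle (Finset.card_insert_le _ _)
      simp only [Finset.card_singleton, Finset.card_univ] at this
      omega
    obtain ⟨w, _, hw⟩ : ∃ w ∈ (Finset.univ : Finset V), w ∉ ({u, v} : Finset V) := by
      by_contra hc
      push_neg at hc
      exact hcard (Finset.card_le_card (fun x hx => hc x hx))
    simp only [Finset.mem_insert, Finset.mem_singleton, not_or] at hw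
    obtain ⟨hwu, hwv⟩ := hw
    -- walk from w to u must exist, but can never enter {u, v}
    obtain ⟨p⟩ := hconn.preconnected w u
    exact no_escape (fun y hy => h1 ▸ hv'uniq y hy) (fun y hy => h2 ▸ hu'uniq y hy)
      p (Or.inl rfl) hwu hwv
  -- main argument: given a chain walk from a pendant vertex to another,
  -- lab of first pendant edge < lab of second pendant edge
  have main : ∀ (a b c d : V), a ≠ b → G.Adj a c → (∀ y, G.Adj a y → y = c) →
      G.Adj b d → (∀ y, G.Adj b y → y = d) → s(a, c) ≠ s(b, d) →
      lab s(a, c) < lab s(b, d) := by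
    intro a b c d hab hac ha hbd hb hne
    obtain ⟨p, hchain⟩ := hlab a b hab
    have hnil : ¬ p.Nil := by
      intro h
      exact hab (SimpleGraph.Walk.Nil.eq h)
    obtain ⟨x, hx, hlast⟩ := walk_last_edge G p hnil
    have hxd : x = d := hb x hx.symm
    subst hxd
    cases p with
    | nil => exact absurd rfl hab
    | @cons _ c₀ _ h q =>
      have hc : c₀ = c := ha c₀ h
      subst hc
      rw [SimpleGraph.Walk.edges_cons] at hlast hchain
      rcases hqe : q.edges with _ | ⟨e, l⟩
      · rw [hqe] at hlast
        simp only [List.getLast?_singleton, Option.some.injEq] at hlast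
        exact absurd (hlast.trans Sym2.eq_swap) hne
      · rw [hqe, List.getLast?_cons_cons] at hlast
        have hmem : s(x, b) ∈ (e :: l) := List.mem_of_getLast? hlast
        rw [List.map_cons, List.Chain', List.isChain_iff_pairwise, hqe] at hchain
        have hlt := (List.pairwise_cons.mp hchain).1 (lab s(x, b))
          (List.mem_map_of_mem (f := lab) hmem)
        rw [show s(b, x) = s(x, b) from Sym2.eq_swap]
        exact hlt
  have h1 := main u v u' v' huv hu'adj hu'uniq hv'adj hv'uniq hedges
  have h2 := main v u v' u' huv.symm hv'adj hv'uniq hu'adj hu'uniq (Ne.symm hedges)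
  omega
end

section
/- Let G be a graph on n vertices and 2n - 4 edges that is C4-pivotable, i.e., contains an induced 4-cycle C and two spanning trees T_1, T_2 sharing exactly two edges, both belonging to C. Then the maximum degree of G is at most n - 2. -/
set_option maxHeartbeats 8000000

open SimpleGraph

private lemma cyc3' {V : Type*} {T : SimpleGraph V} (hT : T.IsAcyclic) {x y z : V}
    (hxy : x ≠ y) (hyz : y ≠ z) (hxz : x ≠ z)
    (a1 : T.Adj x y) (a2 : T.Adj y z) (a3 : T.Adj z x) : False :=
  hT (Walk.cons a1 (Walk.cons a2 (Walk.cons a3 Walk.nil)))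
    (by simp [Walk.isCycle_def, Walk.isTrail_def, hxy, hyz, hxz, hxy.symm, hyz.symm, hxz.symm,
      Sym2.eq_iff])

private lemma cyc4' {V : Type*} {T : SimpleGraph V} (hT : T.IsAcyclic) {w x y z : V}
    (hwx : w ≠ x) (hwy : w ≠ y) (hwz : w ≠ z) (hxy : x ≠ y) (hxz : x ≠ z) (hyz : y ≠ z)
    (a1 : T.Adj w x) (a2 : T.Adj x y) (a3 : T.Adj y z) (a4 : T.Adj z w) : False :=
  hT (Walk.cons a1 (Walk.cons a2 (Walk.cons a3 (Walk.cons a4 Walk.nil))))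
    (by simp [Walk.isCycle_def, Walk.isTrail_def, Sym2.eq_iff,
      hwx, hwy, hwz, hxy, hxz, hyz, hwx.symm, hwy.symm, hwz.symm, hxy.symm, hxz.symm, hyz.symm])

private lemma cyc5' {V : Type*} {T : SimpleGraph V} (hT : T.IsAcyclic) {v w x y z : V}
    (hvw : v ≠ w) (hvx : v ≠ x) (hvy : v ≠ y) (hvz : v ≠ z)
    (hwx : w ≠ x) (hwy : w ≠ y) (hwz : w ≠ z) (hxy : x ≠ y) (hxz : x ≠ z) (hyz : y ≠ z)
    (a1 : T.Adj v w) (a2 : T.Adj w x) (a3 : T.Adj x y) (a4 : T.Adj y z) (a5 : T.Adj z v) :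
    False :=
  hT (Walk.cons a1 (Walk.cons a2 (Walk.cons a3 (Walk.cons a4 (Walk.cons a5 Walk.nil)))))
    (by simp [Walk.isCycle_def, Walk.isTrail_def, Sym2.eq_iff,
      hvw, hvx, hvy, hvz, hwx, hwy, hwz, hxy, hxz, hyz,
      hvw.symm, hvx.symm, hvy.symm, hvz.symm, hwx.symm, hwy.symm, hwz.symm, hxy.symm,
      hxz.symm, hyz.symm])

/-- If an acyclic graph contains the path a-b-c-d and vertex v (distinct from all of them) is
adjacent to two distinct vertices among {a,b,c,d}, we get a cycle: contradiction. -/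
private lemma key' {V : Type*} {T : SimpleGraph V} (hT : T.IsAcyclic) {a b c d v : V}
    (hab : a ≠ b) (hac : a ≠ c) (had : a ≠ d) (hbc : b ≠ c) (hbd : b ≠ d) (hcd : c ≠ d)
    (hva : v ≠ a) (hvb : v ≠ b) (hvc : v ≠ c) (hvd : v ≠ d)
    (p1 : T.Adj a b) (p2 : T.Adj b c) (p3 : T.Adj c d) :
    ∀ x y : V, x ∈ ({a, b, c, d} : Set V) → y ∈ ({a, b, c, d} : Set V) → x ≠ y →
      T.Adj v x → T.Adj v y → False := by
  have pab : T.Adj v a → T.Adj v b → False := fun h1 h2 =>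
    cyc3' hT hva hab hvb h1 p1 (T.adj_symm h2)
  have pbc : T.Adj v b → T.Adj v c → False := fun h1 h2 =>
    cyc3' hT hvb hbc hvc h1 p2 (T.adj_symm h2)
  have pcd : T.Adj v c → T.Adj v d → False := fun h1 h2 =>
    cyc3' hT hvc hcd hvd h1 p3 (T.adj_symm h2)
  have pac : T.Adj v a → T.Adj v c → False := fun h1 h2 =>
    cyc4' hT hva hvb hvc hab hac hbc h1 p1 p2 (T.adj_symm h2)
  have pbd : T.Adj v b → T.Adj v d → False := fun h1 h2 =>
    cyc4' hT hvb hvc hvd hbc hbd hcd h1 p2 p3 (T.adj_symm h2)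
  have pad : T.Adj v a → T.Adj v d → False := fun h1 h2 =>
    cyc5' hT hva hvb hvc hvd hab hac had hbc hbd hcd h1 p1 p2 p3 (T.adj_symm h2)
  rintro x y (rfl | rfl | rfl | rfl) (rfl | rfl | rfl | rfl) hxy h1 h2 <;>
    first
      | exact hxy rfl
      | exact pab h1 h2 | exact pab h2 h1
      | exact pbc h1 h2 | exact pbc h2 h1
      | exact pcd h1 h2 | exact pcd h2 h1
      | exact pac h1 h2 | exact pac h2 h1
      | exact pbd h1 h2 | exact pbd h2 h1
      | exact pad h1 h2 | exact pad h2 h1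

/-- A set of ncard 2 contained in a 4-element-listed set cannot avoid three distinct elements
of that set. -/
private lemma three_out' {α : Type*} (S : Set α) (w x y z : α)
    (hsub : S ⊆ {w, x, y, z}) (hS : S.ncard = 2) (p q r : α)
    (hpq : p ≠ q) (hpr : p ≠ r) (hqr : q ≠ r)
    (hp : p ∉ S) (hq : q ∉ S) (hr : r ∉ S)
    (hpE : p ∈ ({w, x, y, z} : Set α)) (hqE : q ∈ ({w, x, y, z} : Set α))
    (hrE : r ∈ ({w, x, y, z} : Set α)) : False := by
  have hE : ({w, x, y, z} : Set α).Finite :=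
    (((Set.finite_singleton z).insert y).insert x).insert w
  have hSfin : S.Finite := hE.subset hsub
  have hdisj : Disjoint S ({p, q, r} : Set α) := by
    simp [Set.disjoint_right, hp, hq, hr]
  have hsub2 : S ∪ {p, q, r} ⊆ ({w, x, y, z} : Set α) := by
    intro e he
    rcases he with he | he
    · exact hsub he
    · rcases he with rfl | rfl | rfl <;> assumption
  have h1 : (S ∪ {p, q, r}).ncard = 5 := by
    rw [Set.ncard_union_eq hdisj hSfin (by simp)]
    rw [hS, Set.ncard_insert_of_notMem (by simp [hpq, hpr]) (by simp),
      Set.ncard_insert_of_notMem (by simp [hqr]) (by simp), Set.ncard_singleton]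
  have h2 : (S ∪ {p, q, r}).ncard ≤ ({w, x, y, z} : Set α).ncard :=
    Set.ncard_le_ncard hsub2 hE
  have h3 : ({w, x, y, z} : Set α).ncard ≤ 4 := by
    apply le_trans (Set.ncard_insert_le _ _)
    have := Set.ncard_insert_le x ({y, z} : Set α)
    have := Set.ncard_insert_le y ({z} : Set α)
    simp_all
    omega
  omega

/-- a `C₄`-pivotable graph has maximum degree at most `n - 2`. -/
theorem stmt14 {V : Type*} [Fintype V] [DecidableEq V] (G : SimpleGraph V)
    [DecidableRel G.Adj]
    (hn : 4 ≤ Fintype.card V)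
    (hm : G.edgeSet.ncard = 2 * Fintype.card V - 4)
    (a b c d : V)
    (hab : a ≠ b) (hac : a ≠ c) (had : a ≠ d) (hbc : b ≠ c) (hbd : b ≠ d) (hcd : c ≠ d)
    (e1 : G.Adj a b) (e2 : G.Adj b c) (e3 : G.Adj c d) (e4 : G.Adj d a)
    (hnac : ¬ G.Adj a c) (hnbd : ¬ G.Adj b d)
    (T₁ T₂ : SimpleGraph V) (h₁ : T₁ ≤ G) (h₂ : T₂ ≤ G)
    (ht₁ : T₁.IsTree) (ht₂ : T₂.IsTree)
    (hcard : (T₁.edgeSet ∩ T₂.edgeSet).ncard = 2)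
    (hsub : T₁.edgeSet ∩ T₂.edgeSet ⊆ {s(a, b), s(b, c), s(c, d), s(d, a)}) :
    ∀ v, G.degree v ≤ Fintype.card V - 2 := by
  classical
  intro v
  by_contra hdeg
  push_neg at hdeg
  -- v is adjacent to every other vertex
  have hall : ∀ w, w ≠ v → G.Adj v w := by
    intro w hw
    by_contra hadj
    have hsubn : G.neighborFinset v ⊆ (Finset.univ.erase w).erase v := by
      intro u hu
      rw [SimpleGraph.mem_neighborFinset] at hu
      rw [Finset.mem_erase, Finset.mem_erase]
      refine ⟨hu.ne', ?_, Finset.mem_univ u⟩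
      rintro rfl
      exact hadj hu
    have hc : ((Finset.univ.erase w).erase v).card = Fintype.card V - 2 := by
      rw [Finset.card_erase_of_mem (by simp [hw.symm]), Finset.card_erase_of_mem (by simp)]
      simp [Finset.card_univ]
      omega
    have := Finset.card_le_card hsubn
    rw [hc] at this
    rw [← SimpleGraph.card_neighborFinset_eq_degree] at hdeg
    omega
  -- v is not one of a, b, c, d, and is adjacent to all of them
  have hvna : v ≠ a := by rintro rfl; exact hnac (hall c hac.symm)
  have hvnb : v ≠ b := by rintro rfl; exact hnbd (hall d hbd.symm)
  have hvnc : v ≠ c := by rintro rfl; exact hnac ((hall a hac).symm)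
  have hvnd : v ≠ d := by rintro rfl; exact hnbd ((hall b hbd).symm)
  have hVA : G.Adj v a := hall a hvna.symm
  have hVB : G.Adj v b := hall b hvnb.symm
  have hVC : G.Adj v c := hall c hvnc.symm
  have hVD : G.Adj v d := hall d hvnd.symm
  -- the two trees cover all edges of G
  have hfin1 : T₁.edgeSet.Finite := Set.toFinite _
  have hfin2 : T₂.edgeSet.Finite := Set.toFinite _
  have hn1 : T₁.edgeSet.ncard = Fintype.card V - 1 := by
    have h := ht₁.card_edgeFinset
    rw [SimpleGraph.edgeFinset_card, ← Nat.card_eq_fintype_card,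
      Nat.card_coe_set_eq] at h
    omega
  have hn2 : T₂.edgeSet.ncard = Fintype.card V - 1 := by
    have h := ht₂.card_edgeFinset
    rw [SimpleGraph.edgeFinset_card, ← Nat.card_eq_fintype_card,
      Nat.card_coe_set_eq] at h
    omega
  have hunion : T₁.edgeSet ∪ T₂.edgeSet = G.edgeSet := by
    have hsubU : T₁.edgeSet ∪ T₂.edgeSet ⊆ G.edgeSet :=
      Set.union_subset (SimpleGraph.edgeSet_mono h₁) (SimpleGraph.edgeSet_mono h₂)
    have hkey := Set.ncard_union_add_ncard_inter T₁.edgeSet T₂.edgeSet hfin1 hfin2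
    rw [hcard, hn1, hn2] at hkey
    refine Set.eq_of_subset_of_ncard_le hsubU ?_ (Set.toFinite _)
    rw [hm]
    omega
  have hedge : ∀ x y : V, G.Adj x y → T₁.Adj x y ∨ T₂.Adj x y := by
    intro x y hxy
    have : s(x, y) ∈ T₁.edgeSet ∪ T₂.edgeSet := by
      rw [hunion]; exact (G.mem_edgeSet).mpr hxy
    rcases this with h | h
    · exact Or.inl (T₁.mem_edgeSet.mp h)
    · exact Or.inr (T₂.mem_edgeSet.mp h)
  -- neither tree contains all four cycle edges
  have hnotall1 : ¬(T₁.Adj a b ∧ T₁.Adj b c ∧ T₁.Adj c d ∧ T₁.Adj d a) := by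
    rintro ⟨q1, q2, q3, q4⟩
    exact cyc4' ht₁.IsAcyclic hab hac had hbc hbd hcd q1 q2 q3 q4
  have hnotall2 : ¬(T₂.Adj a b ∧ T₂.Adj b c ∧ T₂.Adj c d ∧ T₂.Adj d a) := by
    rintro ⟨q1, q2, q3, q4⟩
    exact cyc4' ht₂.IsAcyclic hab hac had hbc hbd hcd q1 q2 q3 q4
  -- the four cycle edges are pairwise distinct
  have ne12 : s(a, b) ≠ s(b, c) := by simp [Sym2.eq_iff]; tauto
  have ne13 : s(a, b) ≠ s(c, d) := by simp [Sym2.eq_iff]; tauto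
  have ne14 : s(a, b) ≠ s(d, a) := by simp [Sym2.eq_iff]; tauto
  have ne23 : s(b, c) ≠ s(c, d) := by simp [Sym2.eq_iff]; tauto
  have ne24 : s(b, c) ≠ s(d, a) := by simp [Sym2.eq_iff]; tauto
  have ne34 : s(c, d) ≠ s(d, a) := by simp [Sym2.eq_iff]; tauto
  -- cycle edges are edges of G
  have hEG : ∀ p : Sym2 V, p ∈ ({s(a, b), s(b, c), s(c, d), s(d, a)} : Set (Sym2 V)) →
      p ∈ G.edgeSet := by
    rintro p (rfl | rfl | rfl | rfl) <;>
      [exact (G.mem_edgeSet).mpr e1; exact (G.mem_edgeSet).mpr e2;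
       exact (G.mem_edgeSet).mpr e3; exact (G.mem_edgeSet).mpr e4]
  -- each tree misses at most one of the four cycle edges
  have hmiss₁ : ∀ p q : Sym2 V, p ∈ ({s(a, b), s(b, c), s(c, d), s(d, a)} : Set (Sym2 V)) →
      q ∈ ({s(a, b), s(b, c), s(c, d), s(d, a)} : Set (Sym2 V)) → p ≠ q →
      p ∉ T₁.edgeSet → q ∉ T₁.edgeSet → False := by
    intro p q hpE hqE hpq hp hq
    have hpT2 : p ∈ T₂.edgeSet := by
      have hup : p ∈ T₁.edgeSet ∪ T₂.edgeSet := hunion ▸ hEG p hpE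
      rcases hup with h | h
      · exact absurd h hp
      · exact h
    have hqT2 : q ∈ T₂.edgeSet := by
      have hup : q ∈ T₁.edgeSet ∪ T₂.edgeSet := hunion ▸ hEG q hqE
      rcases hup with h | h
      · exact absurd h hq
      · exact h
    have h4 : ¬T₂.Adj a b ∨ ¬T₂.Adj b c ∨ ¬T₂.Adj c d ∨ ¬T₂.Adj d a := by
      by_contra hcon
      push_neg at hcon
      exact hnotall2 ⟨hcon.1, hcon.2.1, hcon.2.2.1, hcon.2.2.2⟩
    have hpS : p ∉ T₁.edgeSet ∩ T₂.edgeSet := fun h => hp h.1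
    have hqS : q ∉ T₁.edgeSet ∩ T₂.edgeSet := fun h => hq h.1
    rcases h4 with h4 | h4 | h4 | h4
    · exact three_out' _ _ _ _ _ hsub hcard p q s(a, b) hpq
        (fun h => h4 (T₂.mem_edgeSet.mp (h ▸ hpT2)))
        (fun h => h4 (T₂.mem_edgeSet.mp (h ▸ hqT2)))
        hpS hqS (fun h => h4 (T₂.mem_edgeSet.mp h.2)) hpE hqE (by simp)
    · exact three_out' _ _ _ _ _ hsub hcard p q s(b, c) hpq
        (fun h => h4 (T₂.mem_edgeSet.mp (h ▸ hpT2)))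
        (fun h => h4 (T₂.mem_edgeSet.mp (h ▸ hqT2)))
        hpS hqS (fun h => h4 (T₂.mem_edgeSet.mp h.2)) hpE hqE (by simp)
    · exact three_out' _ _ _ _ _ hsub hcard p q s(c, d) hpq
        (fun h => h4 (T₂.mem_edgeSet.mp (h ▸ hpT2)))
        (fun h => h4 (T₂.mem_edgeSet.mp (h ▸ hqT2)))
        hpS hqS (fun h => h4 (T₂.mem_edgeSet.mp h.2)) hpE hqE (by simp)
    · exact three_out' _ _ _ _ _ hsub hcard p q s(d, a) hpq
        (fun h => h4 (T₂.mem_edgeSet.mp (h ▸ hpT2)))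
        (fun h => h4 (T₂.mem_edgeSet.mp (h ▸ hqT2)))
        hpS hqS (fun h => h4 (T₂.mem_edgeSet.mp h.2)) hpE hqE (by simp)
  have hmiss₂ : ∀ p q : Sym2 V, p ∈ ({s(a, b), s(b, c), s(c, d), s(d, a)} : Set (Sym2 V)) →
      q ∈ ({s(a, b), s(b, c), s(c, d), s(d, a)} : Set (Sym2 V)) → p ≠ q →
      p ∉ T₂.edgeSet → q ∉ T₂.edgeSet → False := by
    intro p q hpE hqE hpq hp hq
    have hpT1 : p ∈ T₁.edgeSet := by
      have hup : p ∈ T₁.edgeSet ∪ T₂.edgeSet := hunion ▸ hEG p hpE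
      rcases hup with h | h
      · exact h
      · exact absurd h hp
    have hqT1 : q ∈ T₁.edgeSet := by
      have hup : q ∈ T₁.edgeSet ∪ T₂.edgeSet := hunion ▸ hEG q hqE
      rcases hup with h | h
      · exact h
      · exact absurd h hq
    have h4 : ¬T₁.Adj a b ∨ ¬T₁.Adj b c ∨ ¬T₁.Adj c d ∨ ¬T₁.Adj d a := by
      by_contra hcon
      push_neg at hcon
      exact hnotall1 ⟨hcon.1, hcon.2.1, hcon.2.2.1, hcon.2.2.2⟩
    have hpS : p ∉ T₁.edgeSet ∩ T₂.edgeSet := fun h => hp h.2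
    have hqS : q ∉ T₁.edgeSet ∩ T₂.edgeSet := fun h => hq h.2
    rcases h4 with h4 | h4 | h4 | h4
    · exact three_out' _ _ _ _ _ hsub hcard p q s(a, b) hpq
        (fun h => h4 (T₁.mem_edgeSet.mp (h ▸ hpT1)))
        (fun h => h4 (T₁.mem_edgeSet.mp (h ▸ hqT1)))
        hpS hqS (fun h => h4 (T₁.mem_edgeSet.mp h.1)) hpE hqE (by simp)
    · exact three_out' _ _ _ _ _ hsub hcard p q s(b, c) hpq
        (fun h => h4 (T₁.mem_edgeSet.mp (h ▸ hpT1)))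
        (fun h => h4 (T₁.mem_edgeSet.mp (h ▸ hqT1)))
        hpS hqS (fun h => h4 (T₁.mem_edgeSet.mp h.1)) hpE hqE (by simp)
    · exact three_out' _ _ _ _ _ hsub hcard p q s(c, d) hpq
        (fun h => h4 (T₁.mem_edgeSet.mp (h ▸ hpT1)))
        (fun h => h4 (T₁.mem_edgeSet.mp (h ▸ hqT1)))
        hpS hqS (fun h => h4 (T₁.mem_edgeSet.mp h.1)) hpE hqE (by simp)
    · exact three_out' _ _ _ _ _ hsub hcard p q s(d, a) hpq
        (fun h => h4 (T₁.mem_edgeSet.mp (h ▸ hpT1)))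
        (fun h => h4 (T₁.mem_edgeSet.mp (h ▸ hqT1)))
        hpS hqS (fun h => h4 (T₁.mem_edgeSet.mp h.1)) hpE hqE (by simp)
  -- hence each tree contains three consecutive cycle edges (a Hamiltonian path on {a,b,c,d})
  have path₁ : (T₁.Adj a b ∧ T₁.Adj b c ∧ T₁.Adj c d) ∨ (T₁.Adj b c ∧ T₁.Adj c d ∧ T₁.Adj d a)
      ∨ (T₁.Adj c d ∧ T₁.Adj d a ∧ T₁.Adj a b) ∨ (T₁.Adj d a ∧ T₁.Adj a b ∧ T₁.Adj b c) := by
    by_cases q1 : T₁.Adj a b <;> by_cases q2 : T₁.Adj b c <;> by_cases q3 : T₁.Adj c d <;>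
        by_cases q4 : T₁.Adj d a
    · exact absurd ⟨q1, q2, q3, q4⟩ hnotall1
    · exact Or.inl ⟨q1, q2, q3⟩
    · exact Or.inr (Or.inr (Or.inr ⟨q4, q1, q2⟩))
    · exact absurd (hmiss₁ s(c, d) s(d, a) (by simp) (by simp) ne34
      (fun h => q3 (T₁.mem_edgeSet.mp h)) (fun h => q4 (T₁.mem_edgeSet.mp h))) not_false
    · exact Or.inr (Or.inr (Or.inl ⟨q3, q4, q1⟩))
    · exact absurd (hmiss₁ s(b, c) s(d, a) (by simp) (by simp) ne24
      (fun h => q2 (T₁.mem_edgeSet.mp h)) (fun h => q4 (T₁.mem_edgeSet.mp h))) not_false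
    · exact absurd (hmiss₁ s(b, c) s(c, d) (by simp) (by simp) ne23
      (fun h => q2 (T₁.mem_edgeSet.mp h)) (fun h => q3 (T₁.mem_edgeSet.mp h))) not_false
    · exact absurd (hmiss₁ s(b, c) s(c, d) (by simp) (by simp) ne23
      (fun h => q2 (T₁.mem_edgeSet.mp h)) (fun h => q3 (T₁.mem_edgeSet.mp h))) not_false
    · exact Or.inr (Or.inl ⟨q2, q3, q4⟩)
    · exact absurd (hmiss₁ s(a, b) s(d, a) (by simp) (by simp) ne14
      (fun h => q1 (T₁.mem_edgeSet.mp h)) (fun h => q4 (T₁.mem_edgeSet.mp h))) not_false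
    · exact absurd (hmiss₁ s(a, b) s(c, d) (by simp) (by simp) ne13
      (fun h => q1 (T₁.mem_edgeSet.mp h)) (fun h => q3 (T₁.mem_edgeSet.mp h))) not_false
    · exact absurd (hmiss₁ s(a, b) s(c, d) (by simp) (by simp) ne13
      (fun h => q1 (T₁.mem_edgeSet.mp h)) (fun h => q3 (T₁.mem_edgeSet.mp h))) not_false
    · exact absurd (hmiss₁ s(a, b) s(b, c) (by simp) (by simp) ne12
      (fun h => q1 (T₁.mem_edgeSet.mp h)) (fun h => q2 (T₁.mem_edgeSet.mp h))) not_false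
    · exact absurd (hmiss₁ s(a, b) s(b, c) (by simp) (by simp) ne12
      (fun h => q1 (T₁.mem_edgeSet.mp h)) (fun h => q2 (T₁.mem_edgeSet.mp h))) not_false
    · exact absurd (hmiss₁ s(a, b) s(b, c) (by simp) (by simp) ne12
      (fun h => q1 (T₁.mem_edgeSet.mp h)) (fun h => q2 (T₁.mem_edgeSet.mp h))) not_false
    · exact absurd (hmiss₁ s(a, b) s(b, c) (by simp) (by simp) ne12
      (fun h => q1 (T₁.mem_edgeSet.mp h)) (fun h => q2 (T₁.mem_edgeSet.mp h))) not_false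
  have path₂ : (T₂.Adj a b ∧ T₂.Adj b c ∧ T₂.Adj c d) ∨ (T₂.Adj b c ∧ T₂.Adj c d ∧ T₂.Adj d a)
      ∨ (T₂.Adj c d ∧ T₂.Adj d a ∧ T₂.Adj a b) ∨ (T₂.Adj d a ∧ T₂.Adj a b ∧ T₂.Adj b c) := by
    by_cases q1 : T₂.Adj a b <;> by_cases q2 : T₂.Adj b c <;> by_cases q3 : T₂.Adj c d <;>
        by_cases q4 : T₂.Adj d a
    · exact absurd ⟨q1, q2, q3, q4⟩ hnotall2
    · exact Or.inl ⟨q1, q2, q3⟩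
    · exact Or.inr (Or.inr (Or.inr ⟨q4, q1, q2⟩))
    · exact absurd (hmiss₂ s(c, d) s(d, a) (by simp) (by simp) ne34
      (fun h => q3 (T₂.mem_edgeSet.mp h)) (fun h => q4 (T₂.mem_edgeSet.mp h))) not_false
    · exact Or.inr (Or.inr (Or.inl ⟨q3, q4, q1⟩))
    · exact absurd (hmiss₂ s(b, c) s(d, a) (by simp) (by simp) ne24
      (fun h => q2 (T₂.mem_edgeSet.mp h)) (fun h => q4 (T₂.mem_edgeSet.mp h))) not_false
    · exact absurd (hmiss₂ s(b, c) s(c, d) (by simp) (by simp) ne23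
      (fun h => q2 (T₂.mem_edgeSet.mp h)) (fun h => q3 (T₂.mem_edgeSet.mp h))) not_false
    · exact absurd (hmiss₂ s(b, c) s(c, d) (by simp) (by simp) ne23
      (fun h => q2 (T₂.mem_edgeSet.mp h)) (fun h => q3 (T₂.mem_edgeSet.mp h))) not_false
    · exact Or.inr (Or.inl ⟨q2, q3, q4⟩)
    · exact absurd (hmiss₂ s(a, b) s(d, a) (by simp) (by simp) ne14
      (fun h => q1 (T₂.mem_edgeSet.mp h)) (fun h => q4 (T₂.mem_edgeSet.mp h))) not_false
    · exact absurd (hmiss₂ s(a, b) s(c, d) (by simp) (by simp) ne13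
      (fun h => q1 (T₂.mem_edgeSet.mp h)) (fun h => q3 (T₂.mem_edgeSet.mp h))) not_false
    · exact absurd (hmiss₂ s(a, b) s(c, d) (by simp) (by simp) ne13
      (fun h => q1 (T₂.mem_edgeSet.mp h)) (fun h => q3 (T₂.mem_edgeSet.mp h))) not_false
    · exact absurd (hmiss₂ s(a, b) s(b, c) (by simp) (by simp) ne12
      (fun h => q1 (T₂.mem_edgeSet.mp h)) (fun h => q2 (T₂.mem_edgeSet.mp h))) not_false
    · exact absurd (hmiss₂ s(a, b) s(b, c) (by simp) (by simp) ne12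
      (fun h => q1 (T₂.mem_edgeSet.mp h)) (fun h => q2 (T₂.mem_edgeSet.mp h))) not_false
    · exact absurd (hmiss₂ s(a, b) s(b, c) (by simp) (by simp) ne12
      (fun h => q1 (T₂.mem_edgeSet.mp h)) (fun h => q2 (T₂.mem_edgeSet.mp h))) not_false
    · exact absurd (hmiss₂ s(a, b) s(b, c) (by simp) (by simp) ne12
      (fun h => q1 (T₂.mem_edgeSet.mp h)) (fun h => q2 (T₂.mem_edgeSet.mp h))) not_false
  -- each tree contains at most one edge from v to {a,b,c,d}
  have K₁ : ∀ x y : V, x ∈ ({a, b, c, d} : Set V) → y ∈ ({a, b, c, d} : Set V) → x ≠ y →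
      T₁.Adj v x → T₁.Adj v y → False := by
    rcases path₁ with ⟨q1, q2, q3⟩ | ⟨q1, q2, q3⟩ | ⟨q1, q2, q3⟩ | ⟨q1, q2, q3⟩
    · exact key' ht₁.IsAcyclic hab hac had hbc hbd hcd hvna hvnb hvnc hvnd q1 q2 q3
    · intro x y hx hy hxy h1 h2
      refine key' ht₁.IsAcyclic hbc hbd hab.symm hcd hac.symm had.symm hvnb hvnc hvnd hvna
        q1 q2 q3 x y ?_ ?_ hxy h1 h2
      · simp only [Set.mem_insert_iff, Set.mem_singleton_iff] at hx ⊢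
        rcases hx with rfl | rfl | rfl | rfl <;> simp
      · simp only [Set.mem_insert_iff, Set.mem_singleton_iff] at hy ⊢
        rcases hy with rfl | rfl | rfl | rfl <;> simp
    · intro x y hx hy hxy h1 h2
      refine key' ht₁.IsAcyclic hcd hac.symm hbc.symm had.symm hbd.symm hab
        hvnc hvnd hvna hvnb q1 q2 q3 x y ?_ ?_ hxy h1 h2
      · simp only [Set.mem_insert_iff, Set.mem_singleton_iff] at hx ⊢
        rcases hx with rfl | rfl | rfl | rfl <;> simp
      · simp only [Set.mem_insert_iff, Set.mem_singleton_iff] at hy ⊢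
        rcases hy with rfl | rfl | rfl | rfl <;> simp
    · intro x y hx hy hxy h1 h2
      refine key' ht₁.IsAcyclic had.symm hbd.symm hcd.symm hab hac hbc hvnd hvna hvnb hvnc
        q1 q2 q3 x y ?_ ?_ hxy h1 h2
      · simp only [Set.mem_insert_iff, Set.mem_singleton_iff] at hx ⊢
        rcases hx with rfl | rfl | rfl | rfl <;> simp
      · simp only [Set.mem_insert_iff, Set.mem_singleton_iff] at hy ⊢
        rcases hy with rfl | rfl | rfl | rfl <;> simp
  have K₂ : ∀ x y : V, x ∈ ({a, b, c, d} : Set V) → y ∈ ({a, b, c, d} : Set V) → x ≠ y →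
      T₂.Adj v x → T₂.Adj v y → False := by
    rcases path₂ with ⟨q1, q2, q3⟩ | ⟨q1, q2, q3⟩ | ⟨q1, q2, q3⟩ | ⟨q1, q2, q3⟩
    · exact key' ht₂.IsAcyclic hab hac had hbc hbd hcd hvna hvnb hvnc hvnd q1 q2 q3
    · intro x y hx hy hxy h1 h2
      refine key' ht₂.IsAcyclic hbc hbd hab.symm hcd hac.symm had.symm hvnb hvnc hvnd hvna
        q1 q2 q3 x y ?_ ?_ hxy h1 h2
      · simp only [Set.mem_insert_iff, Set.mem_singleton_iff] at hx ⊢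
        rcases hx with rfl | rfl | rfl | rfl <;> simp
      · simp only [Set.mem_insert_iff, Set.mem_singleton_iff] at hy ⊢
        rcases hy with rfl | rfl | rfl | rfl <;> simp
    · intro x y hx hy hxy h1 h2
      refine key' ht₂.IsAcyclic hcd hac.symm hbc.symm had.symm hbd.symm hab
        hvnc hvnd hvna hvnb q1 q2 q3 x y ?_ ?_ hxy h1 h2
      · simp only [Set.mem_insert_iff, Set.mem_singleton_iff] at hx ⊢
        rcases hx with rfl | rfl | rfl | rfl <;> simp
      · simp only [Set.mem_insert_iff, Set.mem_singleton_iff] at hy ⊢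
        rcases hy with rfl | rfl | rfl | rfl <;> simp
    · intro x y hx hy hxy h1 h2
      refine key' ht₂.IsAcyclic had.symm hbd.symm hcd.symm hab hac hbc hvnd hvna hvnb hvnc
        q1 q2 q3 x y ?_ ?_ hxy h1 h2
      · simp only [Set.mem_insert_iff, Set.mem_singleton_iff] at hx ⊢
        rcases hx with rfl | rfl | rfl | rfl <;> simp
      · simp only [Set.mem_insert_iff, Set.mem_singleton_iff] at hy ⊢
        rcases hy with rfl | rfl | rfl | rfl <;> simp
  -- pigeonhole: the edges va, vb, vc cannot all fit
  rcases hedge v a hVA with h1 | h1 <;> rcases hedge v b hVB with h2 | h2 <;>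
    rcases hedge v c hVC with h3 | h3 <;>
    first
      | exact K₁ a b (by simp) (by simp) hab h1 h2
      | exact K₁ a c (by simp) (by simp) hac h1 h3
      | exact K₁ b c (by simp) (by simp) hbc h2 h3
      | exact K₂ a b (by simp) (by simp) hab h1 h2
      | exact K₂ a c (by simp) (by simp) hac h1 h3
      | exact K₂ b c (by simp) (by simp) hbc h2 h3
end
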